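/- For all 0 ≤ ε ≤ 1/2 and all x ∈ [0,1], one has (1 − H₂(ε))·x ≤ φ(x,ε) ≤ (1−2ε)²·x. -/

import Mathlib

open Finset

/-- The boolean cube `{0,1}^n`. -/
abbrev Cube (n : ℕ) := Fin n → Bool

/-- Expectation over a uniform point of the cube. -/
noncomputable def EX {n : ℕ} (f : Cube n → ℝ) : ℝ :=
  (∑ x : Cube n, f x) / (2 ^ n : ℝ)

/-- The entropy functional `Ent(f) = E f log₂ f - (E f) log₂ (E f)`. -/
noncomputable def Ent {n : ℕ} (f : Cube n → ℝ) : ℝ :=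
  EX (fun x => f x * Real.logb 2 (f x)) - EX f * Real.logb 2 (EX f)

/-- The noise operator `T_ε`. -/
noncomputable def noiseOp {n : ℕ} (ε : ℝ) (f : Cube n → ℝ) : Cube n → ℝ :=
  fun x => ∑ y : Cube n, ε ^ (hammingDist y x) * (1 - ε) ^ (n - hammingDist y x) * f y

/-- Binary entropy function (base 2). -/
noncomputable def H2 (x : ℝ) : ℝ :=
  -(x * Real.logb 2 x) - (1 - x) * Real.logb 2 (1 - x)

/-- The inverse of the binary entropy function, `H₂⁻¹ : [0,1] → [0,1/2]`. -/
noncomputable def H2inv (y : ℝ) : ℝ :=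
  Function.invFunOn H2 (Set.Icc 0 (1 / 2)) y

/-- Mrs. Gerber's function `φ(x, ε)`. -/
noncomputable def phi (x ε : ℝ) : ℝ :=
  1 - H2 ((1 - 2 * ε) * H2inv (1 - x) + ε)

/-- Conditional expectation of `f` given the coordinates in `A`,
viewed as a function on the cube depending only on coordinates in `A`. -/
noncomputable def condE {n : ℕ} (f : Cube n → ℝ) (A : Finset (Fin n)) : Cube n → ℝ :=
  fun x => (∑ z : Cube n, f (fun i => if i ∈ A then x i else z i)) / (2 ^ n : ℝ)

/-- `Ent(f | A) = Ent(E(f | A))`. -/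
noncomputable def EntC {n : ℕ} (f : Cube n → ℝ) (A : Finset (Fin n)) : ℝ :=
  Ent (condE f A)

/-- Expectation over a random subset `T ⊆ [n]` obtained by including each element
independently with probability `l`. -/
noncomputable def ETsub {n : ℕ} (l : ℝ) (g : Finset (Fin n) → ℝ) : ℝ :=
  ∑ T : Finset (Fin n), l ^ T.card * (1 - l) ^ (n - T.card) * g T


/-- Marginal of a distribution `p` on the cube on the coordinates in `T`
(as a function on the cube, depending only on the coordinates in `T`). -/
noncomputable def marg {n : ℕ} (p : Cube n → ℝ) (T : Finset (Fin n)) (x : Cube n) : ℝ :=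
  ∑ y : Cube n, if ∀ i ∈ T, y i = x i then p y else 0

/-- Shannon entropy (base 2) of the marginal of `p` on the coordinates in `T`:
the sum goes over canonical representatives (coordinates outside `T` set to `false`). -/
noncomputable def margEnt {n : ℕ} (p : Cube n → ℝ) (T : Finset (Fin n)) : ℝ :=
  -∑ x : Cube n,
      if ∀ i ∉ T, x i = false then marg p T x * Real.logb 2 (marg p T x) else 0

/-- Shannon entropy (base 2) of a probability distribution on the cube. -/
noncomputable def shEnt {n : ℕ} (p : Cube n → ℝ) : ℝ :=
  -∑ y : Cube n, p y * Real.logb 2 (p y)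

/-- Walsh function `W_S(x) = (-1)^{∑_{i ∈ S} x_i}`. -/
def walsh {n : ℕ} (S : Finset (Fin n)) (x : Cube n) : ℝ :=
  ∏ i ∈ S, (if x i then (-1 : ℝ) else 1)

/-- Walsh–Fourier coefficient `f̂(S) = E_x f(x) W_S(x)`. -/
noncomputable def fourierCoef {n : ℕ} (f : Cube n → ℝ) (S : Finset (Fin n)) : ℝ :=
  EX (fun x => f x * walsh S x)

/-- The noise operator `T_{ε,R}` acting only in the directions in `R`
(the composition of the directional noise operators `T_{ε,i}`, `i ∈ R`). -/
noncomputable def noiseOpOn {n : ℕ} (ε : ℝ) (R : Finset (Fin n)) (g : Cube n → ℝ) :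
    Cube n → ℝ :=
  fun x => ∑ y : Cube n,
    (if ∀ i ∉ R, y i = x i then ∏ i ∈ R, (if y i = x i then 1 - ε else ε) else 0) * g y

/-- `I_g(A,m) = Ent(g | A ∪ {m}) - Ent(g | A) - Ent(g | {m})`. -/
noncomputable def Ifun {n : ℕ} (g : Cube n → ℝ) (A : Finset (Fin n)) (m : Fin n) : ℝ :=
  EntC g (insert m A) - EntC g A - EntC g {m}

/-- `Z_{S;i,j}(f) = Ent(f|S∪{i,j}) - Ent(f|S∪{i}) - Ent(f|S∪{j}) + Ent(f|S)`. -/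
noncomputable def Zfun {n : ℕ} (f : Cube n → ℝ) (S : Finset (Fin n)) (i j : Fin n) : ℝ :=
  EntC f (insert i (insert j S)) - EntC f (insert i S) - EntC f (insert j S) + EntC f S

/-- `Y(A,m,s)`: the average of `Z_{S;i,m}(f)` over subsets `S ⊆ A` with `|S| = s - 1`
and over `i ∈ A \ S`. -/
noncomputable def Yavg {n : ℕ} (f : Cube n → ℝ) (A : Finset (Fin n)) (m : Fin n) (s : ℕ) : ℝ :=
  (∑ S ∈ A.powerset.filter (fun S => S.card = s - 1), ∑ i ∈ A \ S, Zfun f S i m) /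
    (∑ S ∈ A.powerset.filter (fun S => S.card = s - 1), ((A \ S).card : ℝ))

/-- `Λ(k,s,λ) = 1 - ∑_{j=0}^{s-1} C(k,j) λ^j (1-λ)^{k-j}`. -/
noncomputable def Lam (k s : ℕ) (l : ℝ) : ℝ :=
  1 - ∑ j ∈ Finset.range s, (Nat.choose k j : ℝ) * l ^ j * (1 - l) ^ (k - j)

/-- `t_s`: the average of `Z_{S;i,j}(f)` over subsets `S ⊆ [n]` with `|S| = s - 1`
and over distinct `i, j ∉ S`. -/
noncomputable def tAvg {n : ℕ} (f : Cube n → ℝ) (s : ℕ) : ℝ :=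
  (∑ S ∈ (Finset.univ : Finset (Finset (Fin n))).filter (fun S => S.card = s - 1),
      ∑ i ∈ Sᶜ, ∑ j ∈ Sᶜ \ {i}, Zfun f S i j) /
    (∑ S ∈ (Finset.univ : Finset (Finset (Fin n))).filter (fun S => S.card = s - 1),
      ∑ i ∈ Sᶜ, ((Sᶜ \ {i}).card : ℝ))

/-- The entropy functional on an arbitrary finite set with uniform measure. -/
noncomputable def entFin {α : Type*} [Fintype α] (g : α → ℝ) : ℝ :=
  (∑ a, g a * Real.logb 2 (g a)) / (Fintype.card α : ℝ) -
    ((∑ a, g a) / (Fintype.card α : ℝ)) * Real.logb 2 ((∑ a, g a) / (Fintype.card α : ℝ))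

section MrsGerber
open Real Set

noncomputable def phiT (x : ℝ) : ℝ := ((1+x) * Real.log (1+x) + (1-x) * Real.log (1-x)) / 2
noncomputable def Af (x : ℝ) : ℝ := (Real.log (1+x) - Real.log (1-x)) / 2

lemma continuous_phiT : Continuous phiT := by
  unfold phiT
  have h := Real.continuous_mul_log
  fun_prop

lemma phiT_zero : phiT 0 = 0 := by simp [phiT]
lemma phiT_one : phiT 1 = Real.log 2 := by norm_num [phiT]
lemma Af_zero : Af 0 = 0 := by simp [Af]

lemma hasDerivAt_phiT {x : ℝ} (h1 : -1 < x) (h2 : x < 1) : HasDerivAt phiT (Af x) x := by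
  have hp : (0:ℝ) < 1 + x := by linarith
  have hm : (0:ℝ) < 1 - x := by linarith
  have d1 : HasDerivAt (fun x : ℝ => (1+x) * Real.log (1+x))
      (Real.log (1+x) + 1) x := by
    have := ((hasDerivAt_id' x).const_add 1).fun_mul
      (((hasDerivAt_id' x).const_add 1).log hp.ne')
    convert (config := {preTransparency := .default}) this using 1
    field_simp
  have d2 : HasDerivAt (fun x : ℝ => (1-x) * Real.log (1-x))
      (-(Real.log (1-x) + 1)) x := by
    have := ((hasDerivAt_id' x).const_sub 1).fun_mul
      (((hasDerivAt_id' x).const_sub 1).log hm.ne')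
    convert (config := {preTransparency := .default}) this using 1
    field_simp
    ring
  have := (d1.fun_add d2).div_const 2
  convert (config := {preTransparency := .default}) this using 1
  unfold Af; ring

lemma hasDerivAt_Af {x : ℝ} (h1 : -1 < x) (h2 : x < 1) : HasDerivAt Af (1/(1-x^2)) x := by
  have hp : (0:ℝ) < 1 + x := by linarith
  have hm : (0:ℝ) < 1 - x := by linarith
  have d1 : HasDerivAt (fun x : ℝ => Real.log (1+x)) (1/(1+x)) x := by
    have := ((hasDerivAt_id' x).const_add 1).log hp.ne'
    convert this using 1
  have d2 : HasDerivAt (fun x : ℝ => Real.log (1-x)) (-(1/(1-x))) x := by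
    have := ((hasDerivAt_id' x).const_sub 1).log hm.ne'
    convert this using 1; field_simp
  have hq : (1:ℝ) - x^2 ≠ 0 := by nlinarith
  have := (d1.fun_sub d2).div_const 2
  convert (config := {preTransparency := .default}) this using 1
  field_simp
  ring




lemma mono_from_deriv {f f' : ℝ → ℝ}
    (hd : ∀ x, -1 < x → x < 1 → HasDerivAt f (f' x) x)
    (h0 : ∀ x, 0 < x → x < 1 → 0 ≤ f' x) :
    ∀ ⦃a b : ℝ⦄, 0 ≤ a → a ≤ b → b < 1 → f a ≤ f b := by
  have hm : MonotoneOn f (Set.Ico 0 1) := by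
    apply monotoneOn_of_deriv_nonneg (convex_Ico 0 1)
    · intro x hx
      exact (hd x (by linarith [hx.1]) hx.2).continuousAt.continuousWithinAt
    · rw [interior_Ico]
      intro x hx
      exact (hd x (by linarith [hx.1]) hx.2).differentiableAt.differentiableWithinAt
    · rw [interior_Ico]
      intro x hx
      rw [(hd x (by linarith [hx.1]) hx.2).deriv]
      exact h0 x hx.1 hx.2
  intro a b ha hab hb
  exact hm ⟨ha, lt_of_le_of_lt hab hb⟩ ⟨le_trans ha hab, hb⟩ hab

lemma Af_pos {x : ℝ} (h0 : 0 < x) (h1 : x < 1) : 0 < Af x := by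
  have : Real.log (1-x) < Real.log (1+x) :=
    Real.log_lt_log (by linarith) (by linarith)
  unfold Af; linarith

lemma Af_nonneg {x : ℝ} (h0 : 0 ≤ x) (h1 : x < 1) : 0 ≤ Af x := by
  rcases eq_or_lt_of_le h0 with h | h
  · rw [← h, Af_zero]
  · exact (Af_pos h h1).le

lemma le_Af {x : ℝ} (h0 : 0 ≤ x) (h1 : x < 1) : x ≤ Af x := by
  have := mono_from_deriv (f := fun x => Af x - x) (f' := fun x => 1/(1-x^2) - 1)
    (fun x hx1 hx2 => (hasDerivAt_Af hx1 hx2).sub (hasDerivAt_id x))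
    (fun x hx1 hx2 => by
      have h : (0:ℝ) < 1 - x^2 := by nlinarith
      have : 1 ≤ 1/(1-x^2) := by
        rw [le_div_iff₀ h]; nlinarith
      linarith)
    le_rfl h0 h1
  simpa [Af_zero] using this

lemma Af_le {x : ℝ} (h0 : 0 ≤ x) (h1 : x < 1) : Af x ≤ x / (1 - x^2) := by
  have hd : ∀ y : ℝ, -1 < y → y < 1 →
      HasDerivAt (fun z : ℝ => z / (1 - z^2)) ((1+y^2)/(1-y^2)^2) y := by
    intro y hy1 hy2
    have h : (1:ℝ) - y^2 ≠ 0 := by nlinarith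
    have := (hasDerivAt_id' y).fun_div
      (((hasDerivAt_pow 2 y).const_sub 1)) h
    convert (config := {preTransparency := .default}) this using 1
    field_simp
    ring
  have := mono_from_deriv (f := fun z => z / (1 - z^2) - Af z)
    (f' := fun z => (1+z^2)/(1-z^2)^2 - 1/(1-z^2))
    (fun y hy1 hy2 => (hd y hy1 hy2).sub (hasDerivAt_Af hy1 hy2))
    (fun y hy1 hy2 => by
      have h : (0:ℝ) < 1 - y^2 := by nlinarith
      rw [sub_nonneg, div_le_div_iff₀ h (by positivity)]
      nlinarith)
    le_rfl h0 h1
  simp only [Af_zero] at this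
  norm_num at this
  linarith




lemma phiT_strictMono : StrictMonoOn phiT (Icc (0:ℝ) 1) := by
  apply strictMonoOn_of_deriv_pos (convex_Icc 0 1) (continuous_phiT.continuousOn)
  rw [interior_Icc]
  intro x hx
  rw [(hasDerivAt_phiT (by linarith [hx.1]) hx.2).deriv]
  exact Af_pos hx.1 hx.2

lemma phiT_pos {x : ℝ} (h0 : 0 < x) (h1 : x ≤ 1) : 0 < phiT x := by
  have := phiT_strictMono (Set.mem_Icc.2 ⟨le_rfl, zero_le_one⟩)
    (Set.mem_Icc.2 ⟨h0.le, h1⟩) h0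
  rwa [phiT_zero] at this

lemma phiT_nonneg {x : ℝ} (h0 : 0 ≤ x) (h1 : x ≤ 1) : 0 ≤ phiT x := by
  rcases eq_or_lt_of_le h0 with h | h
  · rw [← h, phiT_zero]
  · exact (phiT_pos h h1).le

/-- E: `2 φ̃(v) ≤ v A(v)` -/
lemma two_phiT_le {v : ℝ} (h0 : 0 ≤ v) (h1 : v < 1) : 2 * phiT v ≤ v * Af v := by
  have := mono_from_deriv (f := fun v => v * Af v - 2 * phiT v)
    (f' := fun v => v/(1-v^2) - Af v)
    (fun x hx1 hx2 => by
      have d := ((hasDerivAt_id' x).fun_mul (hasDerivAt_Af hx1 hx2)).fun_sub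
        ((hasDerivAt_phiT hx1 hx2).const_mul 2)
      convert (config := {preTransparency := .default}) d using 1
      simp
      ring)
    (fun x hx1 hx2 => sub_nonneg.2 (Af_le hx1.le hx2))
    le_rfl h0 h1
  simp only [Af_zero, phiT_zero] at this
  norm_num at this
  linarith
/-- W: `x (1-x²) A(x) ≤ 2 φ̃(x)` -/
lemma W_ineq {x : ℝ} (h0 : 0 ≤ x) (h1 : x < 1) : x * (1-x^2) * Af x ≤ 2 * phiT x := by
  have := mono_from_deriv (f := fun x => 2 * phiT x - x * (1-x^2) * Af x)
    (f' := fun x => 2 * Af x - ((1 - 3*x^2) * Af x + x))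
    (fun y hy1 hy2 => by
      have hq : (1:ℝ) - y^2 ≠ 0 := by nlinarith
      have d1 : HasDerivAt (fun z : ℝ => z * (1-z^2) * Af z)
          ((1 - 3*y^2) * Af y + y) y := by
        have dz : HasDerivAt (fun z : ℝ => z * (1-z^2)) (1 - 3*y^2) y := by
          have := (hasDerivAt_id' y).fun_mul ((hasDerivAt_pow 2 y).const_sub 1)
          convert (config := {preTransparency := .default}) this using 1
          simp
          ring
        have := dz.fun_mul (hasDerivAt_Af hy1 hy2)
        convert (config := {preTransparency := .default}) this using 1
        field_simp
      exact ((hasDerivAt_phiT hy1 hy2).const_mul 2).sub d1)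
    (fun y hy1 hy2 => by
      have hA := le_Af hy1.le hy2
      nlinarith [Af_nonneg hy1.le hy2])
    le_rfl h0 h1
  simp only [Af_zero, phiT_zero] at this
  norm_num at this
  linarith




/-- derivative of `Af z + z/(1-z^2)` -/
lemma hasDerivAt_Af_aux {y : ℝ} (h1 : -1 < y) (h2 : y < 1) :
    HasDerivAt (fun z : ℝ => Af z + z/(1-z^2))
      (1/(1-y^2) + (1+y^2)/(1-y^2)^2) y := by
  have hq : (1:ℝ) - y^2 ≠ 0 := by nlinarith
  have d2 : HasDerivAt (fun z : ℝ => z / (1 - z^2)) ((1+y^2)/(1-y^2)^2) y := by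
    have := (hasDerivAt_id' y).fun_div (((hasDerivAt_pow 2 y).const_sub 1)) hq
    convert (config := {preTransparency := .default}) this using 1
    field_simp
    ring
  exact (hasDerivAt_Af h1 h2).add d2

/-- N: `x A(x)² ≤ (A(x) + x/(1-x²)) φ̃(x)` -/
lemma N_ineq {x : ℝ} (h0 : 0 ≤ x) (h1 : x < 1) :
    x * (Af x)^2 ≤ (Af x + x/(1-x^2)) * phiT x := by
  have := mono_from_deriv
    (f := fun z => (Af z + z/(1-z^2)) * phiT z - z * (Af z)^2)
    (f' := fun z => ((1/(1-z^2) + (1+z^2)/(1-z^2)^2) * phiT z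
      + (Af z + z/(1-z^2)) * Af z) - ((Af z)^2 + z * (2 * Af z * (1/(1-z^2)))))
    (fun y hy1 hy2 => by
      have d1 := (hasDerivAt_Af_aux hy1 hy2).mul (hasDerivAt_phiT hy1 hy2)
      have d2 : HasDerivAt (fun z : ℝ => z * (Af z)^2)
          ((Af y)^2 + y * (2 * Af y * (1/(1-y^2)))) y := by
        have := (hasDerivAt_id' y).fun_mul ((hasDerivAt_Af hy1 hy2).fun_pow 2)
        convert (config := {preTransparency := .default}) this using 1
        norm_num
      exact d1.sub d2)
    (fun y hy1 hy2 => by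
      have hq : (0:ℝ) < 1 - y^2 := by nlinarith
      have key := W_ineq hy1.le hy2
      have heq : ((1/(1-y^2) + (1+y^2)/(1-y^2)^2) * phiT y
          + (Af y + y/(1-y^2)) * Af y) - ((Af y)^2 + y * (2 * Af y * (1/(1-y^2))))
          = (2 * phiT y - y * (1-y^2) * Af y) / (1-y^2)^2 := by
        field_simp
        ring
      simp only [heq]
      exact div_nonneg (by linarith) (by positivity))
    le_rfl h0 h1
  simp only [Af_zero, phiT_zero] at this
  norm_num at this
  linarith

/-- derivative of m -/
lemma hasDerivAt_m {y : ℝ} (hy : y ∈ Ioo (0:ℝ) 1) :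
    HasDerivAt (fun x => x * Af x / phiT x)
      (((Af y + y * (1/(1-y^2))) * phiT y - y * Af y * Af y) / (phiT y)^2) y := by
  obtain ⟨hy1, hy2⟩ := hy
  have := ((hasDerivAt_id' y).fun_mul (hasDerivAt_Af (by linarith) hy2)).fun_div
    (hasDerivAt_phiT (by linarith) hy2) (phiT_pos hy1 hy2.le).ne'
  convert (config := {preTransparency := .default}) this using 2
  simp

/-- monotonicity of `m(x) = x A(x) / φ̃(x)` on `(0,1)` -/
lemma m_mono : MonotoneOn (fun x => x * Af x / phiT x) (Ioo (0:ℝ) 1) := by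
  apply monotoneOn_of_deriv_nonneg (convex_Ioo 0 1)
  · exact fun x hx => (hasDerivAt_m hx).continuousAt.continuousWithinAt
  · rw [interior_Ioo]
    exact fun x hx => (hasDerivAt_m hx).differentiableAt.differentiableWithinAt
  · rw [interior_Ioo]
    intro x hx
    rw [(hasDerivAt_m hx).deriv]
    apply div_nonneg _ (by positivity)
    have hq : (0:ℝ) < 1 - x^2 := by nlinarith [hx.1, hx.2]
    have := N_ineq hx.1.le hx.2
    have heq : x * (1/(1-x^2)) = x/(1-x^2) := by ring
    rw [heq]
    nlinarith [this]




lemma hasDerivAt_phiT_mul {μ s : ℝ} (hμ0 : 0 < μ) (hμ1 : μ ≤ 1)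
    (hs : s ∈ Ioo (0:ℝ) 1) :
    HasDerivAt (fun z : ℝ => phiT (z*μ)) (Af (s*μ) * μ) s := by
  have h1 : -1 < s*μ := by nlinarith [hs.1, hs.2]
  have h2 : s*μ < 1 := by nlinarith [hs.1, hs.2]
  exact (hasDerivAt_phiT h1 h2).comp s (hasDerivAt_mul_const μ)

/-- Upper bound core: `φ̃(λμ) ≤ λ² φ̃(μ)`. -/
lemma phiT_mul_le {l μ : ℝ} (hl0 : 0 ≤ l) (hl1 : l ≤ 1) (hμ0 : 0 ≤ μ) (hμ1 : μ ≤ 1) :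
    phiT (l*μ) ≤ l^2 * phiT μ := by
  rcases eq_or_lt_of_le hl0 with h | hl0'
  · simp [← h, phiT_zero]
  rcases eq_or_lt_of_le hμ0 with h | hμ0'
  · simp [← h, phiT_zero]
  have hmono : MonotoneOn (fun s => phiT (s*μ) / s^2) (Ioc (0:ℝ) 1) := by
    apply monotoneOn_of_deriv_nonneg (convex_Ioc 0 1)
    · apply ContinuousOn.div
      · exact (continuous_phiT.comp (continuous_id.mul continuous_const)).continuousOn
      · fun_prop
      · exact fun x hx => pow_ne_zero 2 hx.1.ne'
    · rw [interior_Ioc]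
      intro s hs
      exact (((hasDerivAt_phiT_mul hμ0' hμ1 hs).div (hasDerivAt_pow 2 s)
        (pow_ne_zero 2 hs.1.ne'))).differentiableAt.differentiableWithinAt
    · rw [interior_Ioc]
      intro s hs
      rw [((hasDerivAt_phiT_mul hμ0' hμ1 hs).fun_div (hasDerivAt_pow 2 s)
        (pow_ne_zero 2 hs.1.ne')).deriv]
      apply div_nonneg _ (by positivity)
      have key := two_phiT_le (v := s*μ) (mul_nonneg hs.1.le hμ0'.le)
        (by nlinarith [hs.1, hs.2])
      have key2 := mul_le_mul_of_nonneg_left key hs.1.le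
      norm_num
      nlinarith [key2]
  have := hmono (Set.mem_Ioc.2 ⟨hl0', hl1⟩) (Set.mem_Ioc.2 ⟨zero_lt_one, le_rfl⟩) hl1
  simp only [one_mul, one_pow, div_one] at this
  calc phiT (l*μ) = (phiT (l*μ) / l^2) * l^2 := by field_simp
  _ ≤ phiT μ * l^2 := by
      apply mul_le_mul_of_nonneg_right this (by positivity)
  _ = l^2 * phiT μ := by ring

/-- Lower bound core: `φ̃(λ) φ̃(μ) ≤ log 2 · φ̃(λμ)`. -/
lemma phiT_supermul {l μ : ℝ} (hl0 : 0 ≤ l) (hl1 : l ≤ 1) (hμ0 : 0 ≤ μ) (hμ1 : μ ≤ 1) :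
    phiT l * phiT μ ≤ Real.log 2 * phiT (l*μ) := by
  rcases eq_or_lt_of_le hl0 with h | hl0'
  · simp [← h, phiT_zero]
  rcases eq_or_lt_of_le hμ0 with h | hμ0'
  · simp [← h, phiT_zero]
  set D : ℝ → ℝ := fun s => Real.log (phiT (s*μ)) - Real.log (phiT s)
    - Real.log (phiT μ) + Real.log (Real.log 2) with hD
  have hanti : AntitoneOn D (Ioc (0:ℝ) 1) := by
    apply antitoneOn_of_deriv_nonpos (convex_Ioc 0 1)
    · have c1 : ContinuousOn (fun s : ℝ => Real.log (phiT (s*μ))) (Ioc (0:ℝ) 1) := by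
        apply ContinuousOn.log
        · exact (continuous_phiT.comp (continuous_id.mul continuous_const)).continuousOn
        · exact fun x hx => (phiT_pos (mul_pos hx.1 hμ0') (by nlinarith [hx.1, hx.2])).ne'
      have c2 : ContinuousOn (fun s : ℝ => Real.log (phiT s)) (Ioc (0:ℝ) 1) := by
        apply ContinuousOn.log continuous_phiT.continuousOn
        exact fun x hx => (phiT_pos hx.1 hx.2).ne'
      exact ((c1.sub c2).sub continuousOn_const).add continuousOn_const
    · rw [interior_Ioc]
      intro s hs
      have hp1 : (0:ℝ) < phiT (s*μ) := phiT_pos (mul_pos hs.1 hμ0') (by nlinarith [hs.1, hs.2])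
      have hp2 : (0:ℝ) < phiT s := phiT_pos hs.1 hs.2.le
      exact ((((hasDerivAt_phiT_mul hμ0' hμ1 hs).log hp1.ne').sub
        ((hasDerivAt_phiT (by linarith [hs.1]) hs.2).log hp2.ne')).sub_const
        _ |>.add_const _).differentiableAt.differentiableWithinAt
    · rw [interior_Ioc]
      intro s hs
      have hp1 : (0:ℝ) < phiT (s*μ) := phiT_pos (mul_pos hs.1 hμ0') (by nlinarith [hs.1, hs.2])
      have hp2 : (0:ℝ) < phiT s := phiT_pos hs.1 hs.2.le
      rw [(((((hasDerivAt_phiT_mul hμ0' hμ1 hs).log hp1.ne').fun_sub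
        ((hasDerivAt_phiT (by linarith [hs.1]) hs.2).log hp2.ne')).sub_const
        _).add_const _).deriv]
      have hm : s*μ * Af (s*μ) / phiT (s*μ) ≤ s * Af s / phiT s :=
        m_mono (a := s*μ) (b := s)
          ⟨mul_pos hs.1 hμ0', by nlinarith [hs.1, hs.2]⟩ hs
          (by nlinarith [hs.1, hs.2])
      have hs0 : s ≠ 0 := hs.1.ne'
      have hq1 : phiT (s*μ) ≠ 0 := hp1.ne'
      have hq2 : phiT s ≠ 0 := hp2.ne'
      have e1 : Af (s*μ) * μ / phiT (s*μ) = (s*μ * Af (s*μ) / phiT (s*μ)) / s := by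
        field_simp
      have e2 : Af s / phiT s = (s * Af s / phiT s) / s := by
        field_simp
      rw [e1, e2]
      exact sub_nonpos.2 (by gcongr <;> exact hs.1.le)
  have h1 : D 1 ≤ D l := hanti (Set.mem_Ioc.2 ⟨hl0', hl1⟩)
    (Set.mem_Ioc.2 ⟨zero_lt_one, le_rfl⟩) hl1
  have hD1 : D 1 = 0 := by
    simp only [hD, one_mul, phiT_one]
    ring
  rw [hD1] at h1
  have hpl : (0:ℝ) < phiT l := phiT_pos hl0' hl1
  have hpμ : (0:ℝ) < phiT μ := phiT_pos hμ0' hμ1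
  have hplμ : (0:ℝ) < phiT (l*μ) := phiT_pos (mul_pos hl0' hμ0') (by nlinarith)
  have hlog2 : (0:ℝ) < Real.log 2 := Real.log_pos (by norm_num)
  have hle : Real.log (phiT l * phiT μ) ≤ Real.log (Real.log 2 * phiT (l*μ)) := by
    rw [Real.log_mul hpl.ne' hpμ.ne', Real.log_mul hlog2.ne' hplμ.ne']
    simp only [hD] at h1
    linarith
  exact (Real.log_le_log_iff (by positivity) (by positivity)).1 hle




lemma H2_eq (x : ℝ) : H2 x = Real.binEntropy x / Real.log 2 := by
  unfold H2 Real.binEntropy Real.logb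
  rw [Real.log_inv, Real.log_inv]
  ring

lemma continuous_H2 : Continuous H2 := by
  have : H2 = fun x => Real.binEntropy x / Real.log 2 := funext H2_eq
  rw [this]
  exact Real.binEntropy_continuous.div_const _

lemma H2_zero : H2 0 = 0 := by simp [H2_eq]
lemma H2_half : H2 (1/2) = 1 := by
  rw [H2_eq, show (1:ℝ)/2 = 2⁻¹ by norm_num, Real.binEntropy_two_inv]
  exact div_self (Real.log_pos (by norm_num : (1:ℝ) < 2)).ne'

lemma H2inv_spec {y : ℝ} (h0 : 0 ≤ y) (h1 : y ≤ 1) :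
    H2inv y ∈ Set.Icc (0:ℝ) (1/2) ∧ H2 (H2inv y) = y := by
  have hiv : Set.Icc (H2 0) (H2 (1/2)) ⊆ H2 '' Set.Icc 0 (1/2) :=
    intermediate_value_Icc (by norm_num) continuous_H2.continuousOn
  have hy : y ∈ H2 '' Set.Icc 0 (1/2) := by
    apply hiv
    rw [H2_zero, H2_half]
    exact ⟨h0, h1⟩
  obtain ⟨a, ha, hay⟩ := hy
  exact ⟨Function.invFunOn_mem ⟨a, ha, hay⟩, Function.invFunOn_eq ⟨a, ha, hay⟩⟩

lemma one_sub_H2 {p : ℝ} (h0 : 0 ≤ p) (h1 : p ≤ 1/2) :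
    1 - H2 p = phiT (1 - 2*p) / Real.log 2 := by
  have hlog2 : (0:ℝ) < Real.log 2 := Real.log_pos (by norm_num)
  rcases eq_or_lt_of_le h0 with h | h
  · rw [← h]
    norm_num [H2_zero, phiT_one]
  · have e1 : (1:ℝ) + (1 - 2*p) = 2*(1-p) := by ring
    have e2 : (1:ℝ) - (1 - 2*p) = 2*p := by ring
    unfold phiT
    rw [e1, e2, Real.log_mul two_ne_zero (by linarith), Real.log_mul two_ne_zero h.ne']
    unfold H2 Real.logb
    field_simp
    ring


/-- `(1 - H₂(ε))·x ≤ φ(x,ε) ≤ (1-2ε)²·x` for `x ∈ [0,1]`, `ε ∈ [0,1/2]`. -/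
theorem stmt2 (ε : ℝ) (hε0 : 0 ≤ ε) (hε1 : ε ≤ 1 / 2)
    (x : ℝ) (hx0 : 0 ≤ x) (hx1 : x ≤ 1) :
    (1 - H2 ε) * x ≤ phi x ε ∧ phi x ε ≤ (1 - 2 * ε) ^ 2 * x := by
  have hlog2 : (0:ℝ) < Real.log 2 := Real.log_pos (by norm_num)
  obtain ⟨⟨ht0, ht1⟩, hH⟩ := H2inv_spec (y := 1 - x) (by linarith) (by linarith)
  set t := H2inv (1-x) with htdef
  set l := 1 - 2*ε with hl
  set μ := 1 - 2*t with hμ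
  have hl0 : 0 ≤ l := by simp [hl]; linarith
  have hl1 : l ≤ 1 := by simp [hl]; linarith
  have hμ0 : 0 ≤ μ := by simp [hμ]; linarith
  have hμ1 : μ ≤ 1 := by simp [hμ]; linarith
  have hphi : phi x ε = phiT (l*μ) / Real.log 2 := by
    have hp0 : 0 ≤ (1 - 2*ε)*t + ε := by positivity
    have hp1 : (1 - 2*ε)*t + ε ≤ 1/2 := by nlinarith
    have := one_sub_H2 hp0 hp1
    unfold phi
    rw [← htdef, this]
    congr 1
    congr 1
    rw [hl, hμ]
    ring
  have hx : x = phiT μ / Real.log 2 := by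
    have := one_sub_H2 ht0 ht1
    rw [hH] at this
    rw [hμ]
    linarith
  have hε : 1 - H2 ε = phiT l / Real.log 2 := one_sub_H2 hε0 hε1
  constructor
  · rw [hphi, hx, hε]
    rw [div_mul_div_comm, div_le_div_iff₀ (by positivity) hlog2]
    have := phiT_supermul hl0 hl1 hμ0 hμ1
    nlinarith [phiT_nonneg (mul_nonneg hl0 hμ0) (by nlinarith), this]
  · rw [hphi, hx]
    rw [← mul_div_assoc]
    exact (div_le_div_iff_of_pos_right hlog2).mpr (phiT_mul_le hl0 hl1 hμ0 hμ1)

end MrsGerber
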